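/- If a shortest path graph H contains an induced claw K_{1,3}, then H contains an induced 4-cycle that uses two of the edges of that induced claw. -/

import Mathlib

open SimpleGraph

variable {V : Type*}

/-- An `(a,b)`-geodesic in `G`: a shortest path from `a` to `b`. -/
def Geodesic (G : SimpleGraph V) (a b : V) : Type _ :=
  {p : G.Walk a b // p.IsPath ∧ p.length = G.dist a b}

/-- The set of index levels at which two geodesics differ
(position `i` in the support list is index level `i`; position `0` is `a`). -/
def diffIndices (G : SimpleGraph V) (a b : V) (U W : Geodesic G a b) : Set ℕ :=
  {i | U.1.support[i]? ≠ W.1.support[i]?}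

/-- The shortest path graph `S(G,a,b)`: vertices are the `(a,b)`-geodesics,
two geodesics being adjacent iff they differ at exactly one index level. -/
def SPG (G : SimpleGraph V) (a b : V) : SimpleGraph (Geodesic G a b) where
  Adj U W := ∃! i, i ∈ diffIndices G a b U W
  symm := by
    constructor
    rintro U W ⟨i, hi, hu⟩
    exact ⟨i, Ne.symm hi, fun j hj => hu j (Ne.symm hj)⟩
  loopless := by
    constructor
    rintro U ⟨i, hi, -⟩
    exact hi rfl

section Aux

variable {G : SimpleGraph V} {a b : V}

lemma spg_adj_intro (U W : Geodesic G a b) (i : ℕ)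
    (h : U.1.support[i]? ≠ W.1.support[i]?)
    (hu : ∀ k : ℕ, U.1.support[k]? ≠ W.1.support[k]? → k = i) :
    (SPG G a b).Adj U W := ⟨i, h, hu⟩

lemma spg_adj_elim {U W : Geodesic G a b} (h : (SPG G a b).Adj U W) :
    ∃! i : ℕ, U.1.support[i]? ≠ W.1.support[i]? := h

lemma walk_head0 {a b : V} (p : G.Walk a b) : p.support[0]? = some a := by
  rw [← List.head?_eq_getElem?, List.head?_eq_head (SimpleGraph.Walk.support_ne_nil _)]
  exact congrArg some (SimpleGraph.Walk.head_support _)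

lemma walk_support_inj : ∀ {a b : V} (p q : G.Walk a b), p.support = q.support → p = q := by
  intro a b p
  induction p with
  | nil =>
    intro q h
    cases q with
    | nil => rfl
    | cons h' q' =>
      have := congrArg List.length h
      simp [SimpleGraph.Walk.length_support] at this
  | cons h' p ih =>
    intro q hq
    cases q with
    | nil =>
      have := congrArg List.length hq
      simp [SimpleGraph.Walk.length_support] at this
    | cons h'' q' =>
      simp only [SimpleGraph.Walk.support_cons, List.cons.injEq, true_and] at hq
      have hc0 := walk_head0 p
      rw [hq] at hc0
      have hc := (walk_head0 q').symm.trans hc0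
      injection hc with hc
      subst hc
      rw [ih q' hq]

lemma geodesic_ext {U W : Geodesic G a b}
    (h : ∀ k : ℕ, U.1.support[k]? = W.1.support[k]?) : U = W :=
  Subtype.ext (walk_support_inj _ _ (List.ext_getElem? h))

lemma geo_len (U : Geodesic G a b) : U.1.support.length = G.dist a b + 1 := by
  rw [SimpleGraph.Walk.length_support, U.2.2]

lemma geo_head (U : Geodesic G a b) : U.1.support[0]? = some a := walk_head0 U.1

lemma geo_last (U : Geodesic G a b) : U.1.support[G.dist a b]? = some b := by
  have h1 : U.1.support.getLast? = U.1.support[G.dist a b]? := by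
    rw [List.getLast?_eq_getElem?, geo_len U, Nat.add_sub_cancel]
  rw [← h1, List.getLast?_eq_getLast (SimpleGraph.Walk.support_ne_nil _)]
  exact congrArg some (SimpleGraph.Walk.getLast_support _)

lemma rel_of_chain' {α : Type*} {R : α → α → Prop} {l : List α} (h : List.Chain' R l)
    {k : ℕ} {x y : α} (hx : l[k]? = some x) (hy : l[k+1]? = some y) : R x y := by
  have hk1 : k + 1 < l.length := by
    by_contra hc
    rw [List.getElem?_eq_none (by omega)] at hy
    simp at hy
  have hr := List.isChain_iff_getElem.mp h k (by omega)
  rw [List.getElem?_eq_getElem (by omega)] at hx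
  rw [List.getElem?_eq_getElem hk1] at hy
  injection hx with hx
  injection hy with hy
  rw [← hx, ← hy]
  exact hr

lemma chain'_of_getElem? {α : Type*} {R : α → α → Prop} {l : List α}
    (h : ∀ k x y, l[k]? = some x → l[k+1]? = some y → R x y) : l.Chain' R := by
  refine List.isChain_iff_getElem.mpr ?_
  intro k hk
  exact h k _ _ (List.getElem?_eq_getElem (by omega)) (List.getElem?_eq_getElem (by omega))

lemma exists_walk_of_support (G : SimpleGraph V) :
    ∀ (t : List V), t.Chain' G.Adj → ∀ a b : V, t.head? = some a → t.getLast? = some b →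
      ∃ p : G.Walk a b, p.support = t := by
  intro t
  induction t with
  | nil => intro _ a b h _; simp at h
  | cons c l ih =>
    intro hch a b hh hl
    obtain rfl : c = a := by simpa using hh
    cases l with
    | nil =>
      obtain rfl : c = b := by simpa using hl
      exact ⟨SimpleGraph.Walk.nil, rfl⟩
    | cons d l' =>
      replace hch := List.isChain_cons_cons.mp hch
      obtain ⟨p, hp⟩ := ih hch.2 d b rfl (by rw [← hl, List.getLast?_cons_cons])
      exact ⟨SimpleGraph.Walk.cons hch.1 p, by simp [hp]⟩

lemma adj_of_same_index {C L M : Geodesic G a b} {i : ℕ}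
    (hL : ∀ k, k ≠ i → C.1.support[k]? = L.1.support[k]?)
    (hM : ∀ k, k ≠ i → C.1.support[k]? = M.1.support[k]?)
    (hne : L ≠ M) : (SPG G a b).Adj L M := by
  have hdiff : L.1.support[i]? ≠ M.1.support[i]? := by
    intro h
    apply hne
    apply geodesic_ext
    intro k
    rcases eq_or_ne k i with rfl | hk
    · exact h
    · rw [← hL k hk, hM k hk]
  refine spg_adj_intro _ _ i hdiff (fun k hk => ?_)
  by_contra hki
  exact hk (by rw [← hL k hki, hM k hki])

lemma key (G : SimpleGraph V) (a b : V) (C X Y : Geodesic G a b) (i j : ℕ)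
    (hij : i + 2 ≤ j)
    (hX : ∀ k, k ≠ i → C.1.support[k]? = X.1.support[k]?)
    (hXi : C.1.support[i]? ≠ X.1.support[i]?)
    (hY : ∀ k, k ≠ j → C.1.support[k]? = Y.1.support[k]?)
    (hYj : C.1.support[j]? ≠ Y.1.support[j]?) :
    ∃ D : Geodesic G a b, D ≠ C ∧ ¬ (SPG G a b).Adj C D ∧
      (SPG G a b).Adj Y D ∧ (SPG G a b).Adj D X := by
  set n := G.dist a b with hn
  have hjn1 : j < n + 1 := by
    by_contra h
    push_neg at h
    exact hYj (by rw [List.getElem?_eq_none (by rw [geo_len]; omega),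
      List.getElem?_eq_none (by rw [geo_len]; omega)])
  have hjn : j ≠ n := by
    intro h
    exact hYj (by rw [h, geo_last, geo_last])
  have hi0 : i ≠ 0 := by
    intro h
    exact hXi (by rw [h, geo_head, geo_head])
  have hjln : j < n := by omega
  have hiv : i < X.1.support.length := by rw [geo_len]; omega
  set v := X.1.support[i]'hiv with hv
  have hXv : X.1.support[i]? = some v := List.getElem?_eq_getElem hiv
  set t := Y.1.support.set i v with ht
  have htlen : t.length = n + 1 := by rw [ht, List.length_set, geo_len]
  have htY : ∀ m, m ≠ i → t[m]? = Y.1.support[m]? :=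
    fun m hm => List.getElem?_set_ne (Ne.symm hm)
  have hti : t[i]? = some v := List.getElem?_set_self (by rw [geo_len]; omega)
  have htX : ∀ m, m ≠ j → t[m]? = X.1.support[m]? := by
    intro m hm
    rcases eq_or_ne m i with rfl | hmi
    · rw [hti, hXv]
    · rw [htY m hmi, ← hY m hm]
      exact hX m hmi
  have chainX := SimpleGraph.Walk.isChain_adj_support X.1
  have chainY := SimpleGraph.Walk.isChain_adj_support Y.1
  have htchain : t.Chain' G.Adj := by
    apply chain'_of_getElem?
    intro k x y hx hy
    rcases eq_or_ne j k with rfl | hjk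
    · exact rel_of_chain' chainY (by rw [← htY j (by omega)]; exact hx)
        (by rw [← htY (j+1) (by omega)]; exact hy)
    · rcases eq_or_ne j (k+1) with rfl | hjk1
      · exact rel_of_chain' chainY (by rw [← htY k (by omega)]; exact hx)
          (by rw [← htY (k+1) (by omega)]; exact hy)
      · exact rel_of_chain' chainX (by rw [← htX k (Ne.symm hjk)]; exact hx)
          (by rw [← htX (k+1) (Ne.symm hjk1)]; exact hy)
  have nodupX : X.1.support.Nodup := (SimpleGraph.Walk.isPath_def _).mp X.2.1
  have nodupY : Y.1.support.Nodup := (SimpleGraph.Walk.isPath_def _).mp Y.2.1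
  have htnodup : t.Nodup := by
    rw [List.nodup_iff_getElem?_ne_getElem?]
    intro p q hpq hq heq
    rw [htlen] at hq
    by_cases hqj : q = j
    · subst hqj
      by_cases hpi : p = i
      · subst hpi
        -- hard case: X's new vertex equals Y's new vertex
        have hvY : Y.1.support[q]? = some v := by
          rw [← htY q (by omega), ← heq]
          exact hti
        set s := X.1.support.take (p+1) ++ Y.1.support.drop (q+1) with hs
        have htk : (X.1.support.take (p+1)).length = p + 1 := by
          rw [List.length_take, geo_len]; omega
        have hdr : (Y.1.support.drop (q+1)).length = n - q := by
          rw [List.length_drop, geo_len]; omega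
        have hslen : s.length = (p + 1) + (n - q) := by
          rw [hs, List.length_append, htk, hdr]
        have hschain : s.Chain' G.Adj := by
          apply List.IsChain.append (chainX.take _) (chainY.drop _)
          intro x hx y hy
          have h1 : (X.1.support.take (p+1)).getLast? = some v := by
            rw [List.getLast?_eq_getElem?, htk, Nat.add_sub_cancel,
              List.getElem?_take_of_lt (by omega), hXv]
          have h2 : (Y.1.support.drop (q+1)).head? = Y.1.support[q+1]? := by
            rw [List.head?_eq_getElem?, List.getElem?_drop]
          rw [h1, Option.mem_some_iff] at hx
          rw [h2, Option.mem_def] at hy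
          subst hx
          exact rel_of_chain' chainY hvY hy
        have hsh : s.head? = some a := by
          rw [List.head?_eq_getElem?, hs, List.getElem?_append, if_pos (by omega),
            List.getElem?_take_of_lt (by omega), geo_head]
        have hsl : s.getLast? = some b := by
          rw [List.getLast?_eq_getElem?, hslen, hs,
            List.getElem?_append_right (by rw [htk]; omega), htk, List.getElem?_drop,
            show q + 1 + (p + 1 + (n - q) - 1 - (p + 1)) = n by omega, geo_last]
        obtain ⟨w, hw⟩ := exists_walk_of_support G s hschain a b hsh hsl
        have hd := SimpleGraph.dist_le w
        have hwl : w.length + 1 = s.length := by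
          rw [← SimpleGraph.Walk.length_support, hw]
        rw [← hn] at hd
        omega
      · -- p ≠ i, use Y
        refine List.nodup_iff_getElem?_ne_getElem?.mp nodupY p q hpq
          (by rw [geo_len]; omega) ?_
        rw [← htY p hpi, ← htY q (by omega)]
        exact heq
    · by_cases hpj : p = j
      · subst hpj
        refine List.nodup_iff_getElem?_ne_getElem?.mp nodupY p q hpq
          (by rw [geo_len]; omega) ?_
        rw [← htY p (by omega), ← htY q (by omega)]
        exact heq
      · refine List.nodup_iff_getElem?_ne_getElem?.mp nodupX p q hpq
          (by rw [geo_len]; omega) ?_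
        rw [← htX p hpj, ← htX q hqj]
        exact heq
  have hth : t.head? = some a := by
    rw [List.head?_eq_getElem?, htY 0 (by omega), geo_head]
  have htl : t.getLast? = some b := by
    rw [List.getLast?_eq_getElem?, show t.length - 1 = n by omega,
      htY n (by omega), geo_last]
  obtain ⟨pD, hpD⟩ := exists_walk_of_support G t htchain a b hth htl
  have hpDlen : pD.length = n := by
    have h1 := SimpleGraph.Walk.length_support pD
    rw [hpD, htlen] at h1
    omega
  have hpath : pD.IsPath := (SimpleGraph.Walk.isPath_def _).mpr (hpD ▸ htnodup)
  refine ⟨⟨pD, hpath, hpDlen⟩, ?_, ?_, ?_, ?_⟩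
  · -- D ≠ C
    intro h
    apply hXi
    have hc : C.1.support = t := by
      have h2 : C.1 = pD := congrArg Subtype.val h.symm
      rw [h2, hpD]
    rw [hc, hti, hXv]
  · -- ¬ Adj C D
    intro hadj
    obtain ⟨k, hk, hu⟩ := spg_adj_elim hadj
    have h1 : i = k := hu i (by
      show C.1.support[i]? ≠ pD.support[i]?
      rw [hpD, hti, ← hXv]; exact hXi)
    have h2 : j = k := hu j (by
      show C.1.support[j]? ≠ pD.support[j]?
      rw [hpD, htY j (by omega)]; exact hYj)
    omega
  · -- Adj Y D
    refine spg_adj_intro _ _ i ?_ ?_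
    · show Y.1.support[i]? ≠ pD.support[i]?
      rw [hpD, hti, ← hXv, ← hY i (by omega)]
      exact hXi
    · intro k hk
      by_contra hki
      apply hk
      show Y.1.support[k]? = pD.support[k]?
      rw [hpD, htY k hki]
  · -- Adj D X
    refine spg_adj_intro _ _ j ?_ ?_
    · show pD.support[j]? ≠ X.1.support[j]?
      rw [hpD, htY j (by omega), ← hX j (by omega)]
      exact Ne.symm hYj
    · intro k hk
      by_contra hkj
      apply hk
      show pD.support[k]? = X.1.support[k]?
      rw [hpD, htX k hkj]

end Aux

/-- an induced claw in a shortest path graph yields an induced 4-cycle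
using two edges of the claw. -/
theorem stmt_11 {V : Type*} (G : SimpleGraph V) (a b : V) (hab : a ≠ b)
    (C L₁ L₂ L₃ : Geodesic G a b)
    (h12 : L₁ ≠ L₂) (h13 : L₁ ≠ L₃) (h23 : L₂ ≠ L₃)
    (a1 : (SPG G a b).Adj C L₁) (a2 : (SPG G a b).Adj C L₂) (a3 : (SPG G a b).Adj C L₃)
    (n12 : ¬ (SPG G a b).Adj L₁ L₂) (n13 : ¬ (SPG G a b).Adj L₁ L₃)
    (n23 : ¬ (SPG G a b).Adj L₂ L₃) :
    ∃ X Y D : Geodesic G a b,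
      (X = L₁ ∨ X = L₂ ∨ X = L₃) ∧ (Y = L₁ ∨ Y = L₂ ∨ Y = L₃) ∧ X ≠ Y ∧
      D ≠ C ∧ ¬ (SPG G a b).Adj C D ∧ ¬ (SPG G a b).Adj X Y ∧
      (SPG G a b).Adj X C ∧ (SPG G a b).Adj C Y ∧
      (SPG G a b).Adj Y D ∧ (SPG G a b).Adj D X := by
  obtain ⟨i₁, hi₁, hu₁⟩ := spg_adj_elim a1
  obtain ⟨i₂, hi₂, hu₂⟩ := spg_adj_elim a2
  obtain ⟨i₃, hi₃, hu₃⟩ := spg_adj_elim a3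
  have hC1 : ∀ k, k ≠ i₁ → C.1.support[k]? = L₁.1.support[k]? := by
    intro k hk; by_contra h; exact hk (hu₁ k h)
  have hC2 : ∀ k, k ≠ i₂ → C.1.support[k]? = L₂.1.support[k]? := by
    intro k hk; by_contra h; exact hk (hu₂ k h)
  have hC3 : ∀ k, k ≠ i₃ → C.1.support[k]? = L₃.1.support[k]? := by
    intro k hk; by_contra h; exact hk (hu₃ k h)
  have d12 : i₁ ≠ i₂ := by
    intro h; subst h; exact n12 (adj_of_same_index hC1 hC2 h12)
  have d13 : i₁ ≠ i₃ := by
    intro h; subst h; exact n13 (adj_of_same_index hC1 hC3 h13)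
  have d23 : i₂ ≠ i₃ := by
    intro h; subst h; exact n23 (adj_of_same_index hC2 hC3 h23)
  rcases Nat.lt_trichotomy i₁ i₂ with h' | h' | h'
  · rcases Nat.lt_trichotomy i₂ i₃ with h'' | h'' | h''
    · obtain ⟨D, hD1, hD2, hD3, hD4⟩ := key G a b C L₁ L₃ i₁ i₃ (by omega) hC1 hi₁ hC3 hi₃
      exact ⟨L₁, L₃, D, Or.inl rfl, Or.inr (Or.inr rfl), h13, hD1, hD2, n13, a1.symm, a3, hD3, hD4⟩
    · exact absurd h'' d23
    · rcases Nat.lt_trichotomy i₁ i₃ with h''' | h''' | h'''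
      · obtain ⟨D, hD1, hD2, hD3, hD4⟩ := key G a b C L₁ L₂ i₁ i₂ (by omega) hC1 hi₁ hC2 hi₂
        exact ⟨L₁, L₂, D, Or.inl rfl, Or.inr (Or.inl rfl), h12, hD1, hD2, n12, a1.symm, a2, hD3, hD4⟩
      · exact absurd h''' d13
      · obtain ⟨D, hD1, hD2, hD3, hD4⟩ := key G a b C L₃ L₂ i₃ i₂ (by omega) hC3 hi₃ hC2 hi₂
        exact ⟨L₃, L₂, D, Or.inr (Or.inr rfl), Or.inr (Or.inl rfl), h23.symm,
          hD1, hD2, fun h => n23 h.symm, a3.symm, a2, hD3, hD4⟩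
  · exact absurd h' d12
  · rcases Nat.lt_trichotomy i₁ i₃ with h'' | h'' | h''
    · obtain ⟨D, hD1, hD2, hD3, hD4⟩ := key G a b C L₂ L₃ i₂ i₃ (by omega) hC2 hi₂ hC3 hi₃
      exact ⟨L₂, L₃, D, Or.inr (Or.inl rfl), Or.inr (Or.inr rfl), h23, hD1, hD2, n23, a2.symm, a3, hD3, hD4⟩
    · exact absurd h'' d13
    · rcases Nat.lt_trichotomy i₂ i₃ with h''' | h''' | h'''
      · obtain ⟨D, hD1, hD2, hD3, hD4⟩ := key G a b C L₂ L₁ i₂ i₁ (by omega) hC2 hi₂ hC1 hi₁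
        exact ⟨L₂, L₁, D, Or.inr (Or.inl rfl), Or.inl rfl, h12.symm,
          hD1, hD2, fun h => n12 h.symm, a2.symm, a1, hD3, hD4⟩
      · exact absurd h''' d23
      · obtain ⟨D, hD1, hD2, hD3, hD4⟩ := key G a b C L₃ L₁ i₃ i₁ (by omega) hC3 hi₃ hC1 hi₁
        exact ⟨L₃, L₁, D, Or.inr (Or.inr rfl), Or.inl rfl, h13.symm,
          hD1, hD2, fun h => n13 h.symm, a3.symm, a1, hD3, hD4⟩
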